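/- Let p be a prime and let A and B be commutative rings of characteristic p which are perfect, i.e. on each of them the Frobenius endomorphism x ↦ x^p is bijective. Then every A-algebra structure on B is formally étale: for every commutative A-algebra R and every ideal I ⊆ R with I² = 0, each A-algebra homomorphism B → R/I lifts uniquely to an A-algebra homomorphism B → R. -/

import Mathlib

universe u

section Aux

variable (p : ℕ) [Fact p.Prime]

private lemma pow_p_eq_of_sub_mem {C : Type u} [CommRing C] [CharP C p]
    {I : Ideal C} (hI : I ^ 2 = ⊥) {a b : C} (h : a - b ∈ I) : a ^ p = b ^ p := by
  have hp : p.Prime := Fact.out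
  obtain ⟨i, hi, rfl⟩ : ∃ i ∈ I, a = b + i := ⟨a - b, h, by ring⟩
  have hi2 : i ^ 2 = 0 := by
    have : i ^ 2 ∈ I ^ 2 := by rw [sq, sq]; exact Ideal.mul_mem_mul hi hi
    simpa [hI] using this
  have hip : i ^ p = 0 := by
    have h2 : i ^ p = i ^ 2 * i ^ (p - 2) := by
      rw [← pow_add]; congr 1; have := hp.two_le; omega
    rw [h2, hi2, zero_mul]
  rw [add_pow_char b i p, hip, add_zero]

end Aux

/-- If `A` and `B` are perfect commutative rings of prime characteristic `p`,
then every `A`-algebra structure on `B` is formally étale: every `A`-algebra homomorphism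
`B → R/I` with `I ^ 2 = 0` lifts uniquely to an `A`-algebra homomorphism `B → R`. -/
theorem perfect_to_perfect_formallyEtale (p : ℕ) [Fact p.Prime]
    (A B : Type u) [CommRing A] [CommRing B] [CharP A p] [CharP B p]
    [PerfectRing A p] [PerfectRing B p] [Algebra A B] :
    Algebra.FormallyEtale A B := by
  rw [Algebra.FormallyEtale.iff_comp_bijective]
  intro C _ _ I hI
  have hp : p.Prime := Fact.out
  have hpC : (p : C) = 0 := by
    have : (algebraMap A C) (p : A) = (p : C) := map_natCast _ p
    rw [CharP.cast_eq_zero A p, map_zero] at this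
    exact this.symm
  obtain ⟨q, hq⟩ := CharP.exists C
  have hqp : q ∣ p := (CharP.cast_eq_zero_iff C q p).mp hpC
  rcases (Nat.Prime.eq_one_or_self_of_dvd hp q hqp) with h1 | hqeq
  · -- `C` is the zero ring
    haveI : CharP C 1 := h1 ▸ hq
    haveI hsub : Subsingleton C := CharP.CharOne.subsingleton
    haveI : Subsingleton (C ⧸ I) :=
      ⟨fun a b => by
        obtain ⟨x, rfl⟩ := Ideal.Quotient.mk_surjective a
        obtain ⟨y, rfl⟩ := Ideal.Quotient.mk_surjective b
        rw [Subsingleton.elim x y]⟩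
    constructor
    · intro g g' _
      ext b
      exact Subsingleton.elim _ _
    · intro f
      refine ⟨{ toFun := fun _ => 1, map_one' := rfl,
                map_mul' := fun _ _ => Subsingleton.elim _ _,
                map_add' := fun _ _ => Subsingleton.elim _ _,
                map_zero' := Subsingleton.elim _ _,
                commutes' := fun _ => Subsingleton.elim _ _ }, ?_⟩
      ext b
      exact Subsingleton.elim _ _
  · haveI hqC : CharP C p := hqeq ▸ hq
    have key : ∀ {a b : C}, a - b ∈ I → a ^ p = b ^ p :=
      fun h => pow_p_eq_of_sub_mem p hI h
    let ψ : B ≃+* B := (frobeniusEquiv B p).symm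
    have hψpow : ∀ b : B, (ψ b) ^ p = b := fun b => frobeniusEquiv_symm_pow_p B p b
    constructor
    · -- injectivity of composition with the quotient map
      intro g g' hgg'
      ext b
      have h1 : g (ψ b) - g' (ψ b) ∈ I := by
        rw [← Ideal.Quotient.eq]
        exact congrFun (congrArg (⇑) hgg') (ψ b)
      calc g b = g (ψ b) ^ p := by rw [← map_pow, hψpow]
        _ = g' (ψ b) ^ p := key h1
        _ = g' b := by rw [← map_pow, hψpow]
    · -- surjectivity of composition with the quotient map
      intro f
      obtain ⟨σ, hσ⟩ : ∃ σ : C ⧸ I → C, ∀ x, Ideal.Quotient.mk I (σ x) = x := by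
        choose σ hσ using Ideal.Quotient.mk_surjective (I := I)
        exact ⟨σ, hσ⟩
      have hmem : ∀ (x : C ⧸ I) (c : C), Ideal.Quotient.mk I c = x → σ x - c ∈ I := by
        intro x c hc
        rw [← Ideal.Quotient.eq_zero_iff_mem, map_sub, hσ, hc, sub_self]
      refine ⟨{ toFun := fun b => (σ (f (ψ b))) ^ p
              , map_one' := ?_, map_mul' := ?_, map_zero' := ?_, map_add' := ?_
              , commutes' := ?_ }, ?_⟩
      · show (σ (f (ψ 1))) ^ p = 1
        have h : σ (f (ψ 1)) - 1 ∈ I := hmem _ 1 (by simp)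
        rw [key h, one_pow]
      · intro x y
        show (σ (f (ψ (x * y)))) ^ p = (σ (f (ψ x))) ^ p * (σ (f (ψ y))) ^ p
        have h : σ (f (ψ (x * y))) - σ (f (ψ x)) * σ (f (ψ y)) ∈ I :=
          hmem _ _ (by simp [hσ])
        rw [key h, mul_pow]
      · show (σ (f (ψ 0))) ^ p = 0
        have h : σ (f (ψ 0)) - 0 ∈ I := hmem _ 0 (by simp)
        rw [key h, zero_pow hp.ne_zero]
      · intro x y
        show (σ (f (ψ (x + y)))) ^ p = (σ (f (ψ x))) ^ p + (σ (f (ψ y))) ^ p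
        have h : σ (f (ψ (x + y))) - (σ (f (ψ x)) + σ (f (ψ y))) ∈ I :=
          hmem _ _ (by simp [hσ])
        rw [key h, add_pow_char _ _ p]
      · intro a
        show (σ (f (ψ (algebraMap A B a)))) ^ p = algebraMap A C a
        set a' := (frobeniusEquiv A p).symm a with ha'
        have ha : a' ^ p = a := frobeniusEquiv_symm_pow_p A p a
        have h1 : ψ (algebraMap A B a) = algebraMap A B a' := by
          apply (frobeniusEquiv B p).injective
          show (frobeniusEquiv B p) ((frobeniusEquiv B p).symm (algebraMap A B a)) = _
          rw [RingEquiv.apply_symm_apply, frobeniusEquiv_def, ← map_pow, ha]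
        have h2 : σ (f (ψ (algebraMap A B a))) - algebraMap A C a' ∈ I := by
          apply hmem
          rw [h1, f.commutes]
          exact ((Ideal.Quotient.mkₐ A I).commutes a').symm ▸ rfl
        rw [key h2, ← map_pow, ha]
      · ext b
        show Ideal.Quotient.mk I ((σ (f (ψ b))) ^ p) = f b
        rw [map_pow, hσ, ← map_pow, hψpow]
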